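/- For every concurrent epistemic game structure M, every coalition A ⊆ Agt, every set of states P ⊆ St, and every state q: if q belongs to the least fixpoint of the monotone operator X ↦ E_A P ∪ ⟨A⟩•X (where ⟨A⟩• is the steadfast next-step operator), then M,q ⊨ ⟨⟨A⟩⟩◇P. (The fixpoint μZ.(E_A φ ∨ ⟨A⟩•Z) is a universal lower bound for ⟨⟨A⟩⟩◇φ.) -/

import Mathlib

/-- A concurrent epistemic game structure (iCGS). -/
structure CEGS where
  Agt : Type
  St : Type
  AP : Type
  Act : Type
  agtFin : Finite Agt
  agtNe : Nonempty Agt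
  stNe : Nonempty St
  actFin : Finite Act
  actNe : Nonempty Act
  V : AP → Set St
  d : Agt → St → Set Act
  d_ne : ∀ a q, (d a q).Nonempty
  o : St → (Agt → Act) → St
  sim : Agt → St → St → Prop
  sim_equiv : ∀ a, Equivalence (sim a)
  uniform : ∀ a q q', sim a q q' → d a q = d a q'

namespace CEGS

variable (M : CEGS)

/-- An action profile available at state `q`. -/
def Avail (q : M.St) (α : M.Agt → M.Act) : Prop := ∀ a, α a ∈ M.d a q

/-- A path: an infinite sequence of states, each next state being the outcome of
some available action profile. -/
def IsPath (lam : ℕ → M.St) : Prop :=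
  ∀ i, ∃ α, M.Avail (lam i) α ∧ lam (i + 1) = M.o (lam i) α

/-- `s` is a collective ir-strategy (uniform, memoryless) for coalition `A`. -/
def IsIrStrat (A : Set M.Agt) (s : M.Agt → M.St → M.Act) : Prop :=
  ∀ a ∈ A, (∀ q, s a q ∈ M.d a q) ∧ (∀ q q', M.sim a q q' → s a q = s a q')

/-- `s` is a collective Ir-strategy (perfect information, memoryless) for coalition `A`. -/
def IsIrStratPI (A : Set M.Agt) (s : M.Agt → M.St → M.Act) : Prop :=
  ∀ a ∈ A, ∀ q, s a q ∈ M.d a q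

/-- `lam ∈ out(q, s_A)`: a path starting at `q` along which every agent of `A` plays `s`. -/
def InOut (A : Set M.Agt) (s : M.Agt → M.St → M.Act) (q : M.St) (lam : ℕ → M.St) : Prop :=
  lam 0 = q ∧ ∀ i, ∃ α, M.Avail (lam i) α ∧ (∀ a ∈ A, α a = s a (lam i)) ∧
    lam (i + 1) = M.o (lam i) α

/-- `lam ∈ out^ir(q, s_A) = ⋃_{a∈A} ⋃_{q ∼_a q'} out(q', s_A)`. -/
def InOutIr (A : Set M.Agt) (s : M.Agt → M.St → M.Act) (q : M.St) (lam : ℕ → M.St) : Prop :=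
  ∃ a ∈ A, ∃ q', M.sim a q q' ∧ M.InOut A s q' lam

/-- The "everybody knows" relation `∼_A^E = ⋃_{a∈A} ∼_a`. -/
def simE (A : Set M.Agt) (q q' : M.St) : Prop := ∃ a ∈ A, M.sim a q q'

/-- The "common knowledge" relation `∼_A^C`: transitive closure of `∼_A^E`. -/
def simC (A : Set M.Agt) : M.St → M.St → Prop := Relation.TransGen (M.simE A)

/-- Individual knowledge: `K_a X`. -/
def Know (a : M.Agt) (X : Set M.St) : Set M.St := {q | ∀ q', M.sim a q q' → q' ∈ X}

/-- Mutual knowledge: `E_A X`. -/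
def EKnow (A : Set M.Agt) (X : Set M.St) : Set M.St := {q | ∀ q', M.simE A q q' → q' ∈ X}

/-- Common knowledge: `C_A X`. -/
def CKnow (A : Set M.Agt) (X : Set M.St) : Set M.St := {q | ∀ q', M.simC A q q' → q' ∈ X}

/-- Next-step operator `⟨A⟩X` (imperfect information). -/
def Next (A : Set M.Agt) (X : Set M.St) : Set M.St :=
  {q | ∃ s, M.IsIrStrat A s ∧ ∀ lam, M.InOutIr A s q lam → lam 1 ∈ X}

/-- `Reach_M(s_A, Q, X)`. -/
def ReachSet (A : Set M.Agt) (s : M.Agt → M.St → M.Act) (Q X : Set M.St) : Set M.St :=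
  {q | q ∈ Q ∧ ∀ lam, M.InOut A s q lam → ∃ i, lam i ∈ X ∧ ∀ j < i, lam j ∈ Q}

/-- Steadfast next-step operator `⟨A⟩•X`. -/
def NextStead (A : Set M.Agt) (X : Set M.St) : Set M.St :=
  {q | ∃ s, M.IsIrStrat A s ∧
    M.ReachSet A s {q' | M.simC A q q'} X = {q' | M.simC A q q'}}

/-- `M,q ⊨ ⟨⟨A⟩⟩◇P` (ATLir reachability, ir-strategies). -/
def CanReach (A : Set M.Agt) (P : Set M.St) (q : M.St) : Prop :=
  ∃ s, M.IsIrStrat A s ∧ ∀ lam, M.InOutIr A s q lam → ∃ i, lam i ∈ P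

/-- `M,q ⊨ ⟨⟨A⟩⟩□P` (ATLir safety, ir-strategies). -/
def CanGlobally (A : Set M.Agt) (P : Set M.St) (q : M.St) : Prop :=
  ∃ s, M.IsIrStrat A s ∧ ∀ lam, M.InOutIr A s q lam → ∀ i, lam i ∈ P

/-- `M,q ⊨ ⟨⟨A⟩⟩ S U P` (ATLir until, ir-strategies). -/
def CanUntil (A : Set M.Agt) (S P : Set M.St) (q : M.St) : Prop :=
  ∃ s, M.IsIrStrat A s ∧ ∀ lam, M.InOutIr A s q lam →
    ∃ i, lam i ∈ P ∧ ∀ j < i, lam j ∈ S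

/-- Perfect-information next-step operator `N^Ir_A(X)`. -/
def NextPI (A : Set M.Agt) (X : Set M.St) : Set M.St :=
  {q | ∃ t, M.IsIrStratPI A t ∧ ∀ lam, M.InOut A t q lam → lam 1 ∈ X}

/-- Perfect-information "globally" operator `G^Ir_A(X)`. -/
def GloballyPI (A : Set M.Agt) (X : Set M.St) : Set M.St :=
  {q | ∃ t, M.IsIrStratPI A t ∧ ∀ lam, M.InOut A t q lam → ∀ i, lam i ∈ X}

/-- Perfect-information "until" operator `U^Ir_A(Y, X)`. -/
def UntilPI (A : Set M.Agt) (Y X : Set M.St) : Set M.St :=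
  {q | ∃ t, M.IsIrStratPI A t ∧ ∀ lam, M.InOut A t q lam →
    ∃ i, lam i ∈ X ∧ ∀ j < i, lam j ∈ Y}

end CEGS

/-- Knaster–Tarski least fixpoint of a set operator. -/
def lfpSet {σ : Type} (f : Set σ → Set σ) : Set σ := sInf {X | f X ⊆ X}

/-- Knaster–Tarski greatest fixpoint of a set operator. -/
def gfpSet {σ : Type} (f : Set σ → Set σ) : Set σ := sSup {X | X ⊆ f X}

namespace SFLB

open CEGS Ordinal Cardinal Classical

variable (M : CEGS) (A : Set M.Agt) (P : Set M.St)

private lemma some_congr {α : Type} {s t : Set α} (hs : s.Nonempty) (ht : t.Nonempty)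
    (e : s = t) : hs.some = ht.some := by subst e; rfl

/-- Default strategy. -/
noncomputable def sdef : M.Agt → M.St → M.Act := fun a q => (M.d_ne a q).some

lemma sdef_mem (a : M.Agt) (q : M.St) : sdef M a q ∈ M.d a q := (M.d_ne a q).some_mem

lemma sdef_strat : M.IsIrStrat A (sdef M) := by
  intro a _
  refine ⟨fun q => sdef_mem M a q, fun q q' h => ?_⟩
  exact some_congr _ _ (M.uniform a q q' h)

lemma reachSet_mono {s : M.Agt → M.St → M.Act} {Q X Y : Set M.St} (hXY : X ⊆ Y) :
    M.ReachSet A s Q X ⊆ M.ReachSet A s Q Y := by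
  rintro q ⟨hq, h⟩
  refine ⟨hq, fun lam hl => ?_⟩
  obtain ⟨i, hi, hj⟩ := h lam hl
  exact ⟨i, hXY hi, hj⟩

/-- The bundled operator `X ↦ E_A P ∪ ⟨A⟩•X`. -/
noncomputable def F : Set M.St →o Set M.St where
  toFun X := M.EKnow A P ∪ M.NextStead A X
  monotone' := by
    intro X Y hXY
    apply Set.union_subset_union_right
    rintro q ⟨s, hs, hr⟩
    refine ⟨s, hs, ?_⟩
    apply Set.Subset.antisymm (fun x hx => hx.1)
    intro x hx
    exact reachSet_mono M A hXY (by rw [hr]; exact hx)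

/-- Ordinal approximants. -/
noncomputable def T (γ : Ordinal) : Set M.St := OrdinalApprox.lfpApprox (F M A P) ⊥ γ

lemma T_mem {γ : Ordinal} {q : M.St} (h : q ∈ T M A P γ) :
    ∃ δ < γ, q ∈ F M A P (T M A P δ) := by
  rw [T, OrdinalApprox.lfpApprox] at h
  simp only [Set.bot_eq_empty, Set.sup_eq_union, Set.iSup_eq_iUnion, Set.empty_union,
    Set.mem_iUnion] at h
  obtain ⟨δ, hδ, hqS⟩ := h
  exact ⟨δ, hδ, hqS⟩

/-- Class of `q` under common knowledge relation. -/
def Cl (q : M.St) : Set M.St := {q' | M.simC A q q'}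

lemma simE_symm {q q' : M.St} (h : M.simE A q q') : M.simE A q' q := by
  obtain ⟨a, ha, hs⟩ := h
  exact ⟨a, ha, (M.sim_equiv a).symm hs⟩

lemma simC_symm {q q' : M.St} (h : M.simC A q q') : M.simC A q' q := by
  induction h with
  | single h => exact Relation.TransGen.single (simE_symm M A h)
  | tail _ h2 ih => exact Relation.TransGen.head (simE_symm M A h2) ih

lemma Cl_eq {q q' : M.St} (h : M.simC A q q') : Cl M A q = Cl M A q' := by
  ext x
  constructor
  · intro hx; exact Relation.TransGen.trans (simC_symm M A h) hx
  · intro hx; exact Relation.TransGen.trans h hx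

lemma simC_refl (hA : A.Nonempty) (q : M.St) : M.simC A q q := by
  obtain ⟨a, ha⟩ := hA
  exact Relation.TransGen.single ⟨a, ha, (M.sim_equiv a).refl q⟩

/-- A class is "good" if some uniform strategy steadfastly reaches some approximant from it. -/
def good (S : Set M.St) : Prop :=
  ∃ γ s, M.IsIrStrat A s ∧ M.ReachSet A s S (T M A P γ) = S

noncomputable def rk (S : Set M.St) : Ordinal :=
  sInf {γ | ∃ s, M.IsIrStrat A s ∧ M.ReachSet A s S (T M A P γ) = S}

lemma rk_mem {S : Set M.St} (h : good M A P S) :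
    ∃ s, M.IsIrStrat A s ∧ M.ReachSet A s S (T M A P (rk M A P S)) = S := by
  have hne : {γ | ∃ s, M.IsIrStrat A s ∧ M.ReachSet A s S (T M A P γ) = S}.Nonempty := by
    obtain ⟨γ, s, h1, h2⟩ := h
    exact ⟨γ, s, h1, h2⟩
  exact csInf_mem hne

lemma rk_le {S : Set M.St} {γ : Ordinal} {s : M.Agt → M.St → M.Act}
    (h1 : M.IsIrStrat A s) (h2 : M.ReachSet A s S (T M A P γ) = S) : rk M A P S ≤ γ :=
  csInf_le' ⟨s, h1, h2⟩

/-- Per-class strategy. -/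
noncomputable def sigS (S : Set M.St) : M.Agt → M.St → M.Act :=
  if h : good M A P S then (rk_mem M A P h).choose else sdef M

lemma sigS_strat (S : Set M.St) : M.IsIrStrat A (sigS M A P S) := by
  rw [sigS]
  split
  · exact (rk_mem M A P (by assumption)).choose_spec.1
  · exact sdef_strat M A

lemma sigS_reach {S : Set M.St} (h : good M A P S) :
    M.ReachSet A (sigS M A P S) S (T M A P (rk M A P S)) = S := by
  rw [sigS, dif_pos h]
  exact (rk_mem M A P h).choose_spec.2

/-- The glued global strategy. -/
noncomputable def sstar : M.Agt → M.St → M.Act := fun a q => sigS M A P (Cl M A q) a q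

lemma sstar_strat : M.IsIrStrat A (sstar M A P) := by
  intro a ha
  constructor
  · intro q; exact ((sigS_strat M A P (Cl M A q)) a ha).1 q
  · intro q q' h
    have hC : Cl M A q = Cl M A q' := Cl_eq M A (Relation.TransGen.single ⟨a, ha, h⟩)
    show sigS M A P (Cl M A q) a q = sigS M A P (Cl M A q') a q'
    rw [← hC]
    exact ((sigS_strat M A P (Cl M A q)) a ha).2 q q' h

/-- Full action profile from a coalition strategy. -/
noncomputable def prof (s : M.Agt → M.St → M.Act) (q : M.St) : M.Agt → M.Act :=
  fun a => if a ∈ A then s a q else sdef M a q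

lemma prof_avail {s : M.Agt → M.St → M.Act} (hs : M.IsIrStrat A s) (q : M.St) :
    M.Avail q (prof M A s q) := by
  intro a
  by_cases ha : a ∈ A
  · simpa [prof, ha] using (hs a ha).1 q
  · simpa [prof, ha] using sdef_mem M a q

/-- Splicing lemma: a path under `s` agreeing with `σ` on `C` inherits the reach property. -/
lemma hit {s σ : M.Agt → M.St → M.Act} {C X : Set M.St}
    (hσ : M.IsIrStrat A σ)
    (hagree : ∀ a ∈ A, ∀ x ∈ C, s a x = σ a x)
    (hreach : ∀ x ∈ C, x ∈ M.ReachSet A σ C X)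
    {q : M.St} {lam : ℕ → M.St} (hq : q ∈ C) (hlam : M.InOut A s q lam) :
    ∃ i, lam i ∈ X ∧ ∀ j < i, lam j ∈ C := by
  classical
  by_cases hall : ∀ i, lam i ∈ C
  · -- lam is itself a σ-path
    have : M.InOut A σ q lam := by
      refine ⟨hlam.1, fun i => ?_⟩
      obtain ⟨α, h1, h2, h3⟩ := hlam.2 i
      exact ⟨α, h1, fun a ha => (h2 a ha).trans (hagree a ha _ (hall i)), h3⟩
    exact (hreach q hq).2 lam this
  · push_neg at hall
    have hex : ∃ m, lam m ∉ C := hall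
    set m := Nat.find hex with hm
    have hmC : lam m ∉ C := Nat.find_spec hex
    have hltC : ∀ j < m, lam j ∈ C := fun j hj => by
      by_contra hc; exact absurd (Nat.find_le hc) (not_le.mpr hj)
    -- splice
    set ext : M.St → M.St := fun x => M.o x (prof M A σ x) with hext
    set lam' : ℕ → M.St := fun n => if n ≤ m then lam n else ext^[n - m] (lam m) with hlam'
    have hagree' : ∀ n ≤ m, lam' n = lam n := fun n hn => by simp [hlam', hn]
    have hiter : ∀ n, m ≤ n → lam' n = ext^[n - m] (lam m) := by
      intro n hn
      rcases eq_or_lt_of_le hn with rfl | hlt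
      · simp [hlam']
      · simp [hlam', Nat.not_le.mpr hlt, not_le.mpr hlt]
    have hout' : M.InOut A σ q lam' := by
      refine ⟨by rw [hagree' 0 (Nat.zero_le m)]; exact hlam.1, fun n => ?_⟩
      by_cases hn : n < m
      · obtain ⟨α, h1, h2, h3⟩ := hlam.2 n
        rw [hagree' n (le_of_lt hn), hagree' (n+1) hn]
        exact ⟨α, h1, fun a ha => (h2 a ha).trans (hagree a ha _ (hltC n hn)), h3⟩
      · push_neg at hn
        have e1 : lam' n = ext^[n - m] (lam m) := hiter n hn
        have e2 : lam' (n+1) = ext^[n + 1 - m] (lam m) := hiter (n+1) (le_trans hn (Nat.le_succ n))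
        have e3 : lam' (n+1) = ext (lam' n) := by
          rw [e1, e2, Nat.succ_sub hn, Function.iterate_succ_apply']
        refine ⟨prof M A σ (lam' n), prof_avail M A hσ _, fun a ha => ?_, e3⟩
        simp [prof, ha]
    obtain ⟨i, hiX, hjC⟩ := (hreach q hq).2 lam' hout'
    have him : i ≤ m := by
      by_contra hc
      push_neg at hc
      exact hmC (by rw [← hagree' m le_rfl]; exact hjC m hc)
    refine ⟨i, by rw [← hagree' i him]; exact hiX, fun j hj => ?_⟩
    rw [← hagree' j (le_of_lt (lt_of_lt_of_le hj him))]
    exact hjC j hj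

/-- Main induction: states in good classes reach `P` under `sstar`. -/
lemma claimI (hA : A.Nonempty) :
    ∀ γ : Ordinal, ∀ q : M.St, good M A P (Cl M A q) → rk M A P (Cl M A q) ≤ γ →
      ∀ lam, M.InOut A (sstar M A P) q lam → ∃ i, lam i ∈ P := by
  intro γ
  induction γ using Ordinal.induction with
  | h γ IH =>
    intro q hgood hrk lam hlam
    have hqC : q ∈ Cl M A q := simC_refl M A hA q
    have hreach := sigS_reach M A P hgood
    have hhit : ∃ i, lam i ∈ T M A P (rk M A P (Cl M A q)) ∧ ∀ j < i, lam j ∈ Cl M A q := by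
      refine hit M A (sigS_strat M A P (Cl M A q)) ?_ ?_ hqC hlam
      · intro a ha x hx
        show sigS M A P (Cl M A x) a x = sigS M A P (Cl M A q) a x
        rw [Cl_eq M A (hx : M.simC A q x)]
      · intro x hx; rw [hreach]; exact hx
    obtain ⟨i, hiT, _⟩ := hhit
    obtain ⟨δ, hδ, hzF⟩ := T_mem M A P hiT
    rcases hzF with hzE | hzN
    · -- E_A P: lam i ∈ P by reflexivity
      obtain ⟨a, ha⟩ := hA
      exact ⟨i, hzE (lam i) ⟨a, ha, (M.sim_equiv a).refl (lam i)⟩⟩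
    · -- steadfast: recurse on tail
      obtain ⟨s', hs', hr'⟩ := hzN
      have hgoodz : good M A P (Cl M A (lam i)) := ⟨δ, s', hs', hr'⟩
      have hrkz : rk M A P (Cl M A (lam i)) ≤ δ := rk_le M A P hs' hr'
      have htail : M.InOut A (sstar M A P) (lam i) (fun n => lam (i + n)) := by
        refine ⟨by simp, fun n => ?_⟩
        obtain ⟨α, h1, h2, h3⟩ := hlam.2 (i + n)
        exact ⟨α, h1, h2, h3⟩
      obtain ⟨n, hn⟩ := IH δ (lt_of_lt_of_le hδ hrk) (lam i) hgoodz hrkz _ htail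
      exact ⟨i + n, hn⟩

end SFLB

/-- the steadfast fixpoint `μX.(E_A P ∪ ⟨A⟩•X)` is a universal lower
bound for `⟨⟨A⟩⟩◇P`. -/
theorem steadfast_fixpoint_lower_bound (M : CEGS) (A : Set M.Agt) (P : Set M.St)
    (q : M.St) (h : q ∈ lfpSet (fun X => M.EKnow A P ∪ M.NextStead A X)) :
    M.CanReach A P q := by
  classical
  rcases Set.eq_empty_or_nonempty A with hA | hA
  · refine ⟨SFLB.sdef M, SFLB.sdef_strat M A, ?_⟩
    rintro lam ⟨a, ha, _⟩
    rw [hA] at ha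
    exact absurd ha (Set.notMem_empty a)
  · have hlfp : lfpSet (fun X => M.EKnow A P ∪ M.NextStead A X) = (SFLB.F M A P).lfp := rfl
    rw [hlfp, ← OrdinalApprox.lfpApprox_ord_eq_lfp] at h
    have h' : q ∈ SFLB.T M A P (Order.succ (Cardinal.mk (Set M.St))).ord := h
    obtain ⟨δ, _, hδ⟩ := SFLB.T_mem M A P h'
    rcases hδ with hE | hN
    · refine ⟨SFLB.sdef M, SFLB.sdef_strat M A, ?_⟩
      rintro lam ⟨a, ha, q', hsim, h0, _⟩
      exact ⟨0, by rw [h0]; exact hE q' ⟨a, ha, hsim⟩⟩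
    · obtain ⟨s, hs, hr⟩ := hN
      refine ⟨SFLB.sstar M A P, SFLB.sstar_strat M A P, ?_⟩
      rintro lam ⟨a, ha, q', hsim, hout⟩
      have hCq' : SFLB.Cl M A q' = SFLB.Cl M A q :=
        (SFLB.Cl_eq M A (Relation.TransGen.single ⟨a, ha, hsim⟩)).symm
      have hgood : SFLB.good M A P (SFLB.Cl M A q') := by
        rw [hCq']
        exact ⟨δ, s, hs, hr⟩
      exact SFLB.claimI M A P hA _ q' hgood le_rfl lam hout
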